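/- Let 1 < r < 2 and suppose there exists σ > n(1/r − 1/2) such that Σ_{ν ∈ ℕ₀ⁿ} |ν|^{2σ} ∫_{ℝⁿ} |m(x,ν)|² φ_ν(x)² dx < ∞. Then the Hermite pseudo-multiplier T_m belongs to the Schatten class S_r(L²(ℝⁿ)). -/

import Mathlib

open MeasureTheory Filter
open scoped BigOperators ENNReal

noncomputable section

/-- Physicists' Hermite polynomials: `H₀ = 1`, `H_{k+1} = 2 X H_k - H_k'`. -/
def physHermite : ℕ → Polynomial ℝ
  | 0 => 1
  | k + 1 => 2 * Polynomial.X * physHermite k - Polynomial.derivative (physHermite k)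

/-- One-dimensional normalized Hermite functions. -/
def hermiteFun (k : ℕ) (x : ℝ) : ℝ :=
  ((2 : ℝ) ^ k * (Nat.factorial k : ℝ) * Real.sqrt Real.pi) ^ (-(1 : ℝ) / 2) *
    (physHermite k).eval x * Real.exp (-x ^ 2 / 2)

/-- Product of one-dimensional Hermite functions for a multi-index, plain pi-type version. -/
def hermiteProd (n : ℕ) (ν : Fin n → ℕ) (x : Fin n → ℝ) : ℝ :=
  ∏ j, hermiteFun (ν j) (x j)

/-- `n`-dimensional Hermite function `φ_ν` on `ℝⁿ`. -/
def hermiteFunN (n : ℕ) (ν : Fin n → ℕ) (x : EuclideanSpace ℝ (Fin n)) : ℝ :=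
  ∏ j, hermiteFun (ν j) (x j)

/-- `L²(ℝⁿ)` with complex scalars. -/
abbrev L2Rn (n : ℕ) :=
  MeasureTheory.Lp ℂ 2 (volume : Measure (EuclideanSpace ℝ (Fin n)))

/-- `k`-th singular value (approximation number) of an operator on a Hilbert space:
the distance of `T` to operators of rank at most `k`. -/
def singularValue {H : Type*} [NormedAddCommGroup H] [InnerProductSpace ℂ H]
    (T : H →L[ℂ] H) (k : ℕ) : ℝ :=
  sInf {c : ℝ | ∃ F : H →L[ℂ] H,
    (∃ v : Fin k → H, LinearMap.range (F : H →ₗ[ℂ] H) ≤ Submodule.span ℂ (Set.range v)) ∧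
      c = ‖T - F‖}

/-- Schatten–von Neumann class of order `r`: the singular values are `r`-summable. -/
def MemSchatten {H : Type*} [NormedAddCommGroup H] [InnerProductSpace ℂ H]
    (r : ℝ) (T : H →L[ℂ] H) : Prop :=
  Summable fun k => singularValue T k ^ r

/-- Hilbert–Schmidt operators: `∑ ‖T e_ν‖² < ∞` for every orthonormal basis. -/
def IsHilbertSchmidt {H : Type*} [NormedAddCommGroup H] [InnerProductSpace ℂ H]
    (T : H →L[ℂ] H) : Prop :=
  ∀ (ι : Type) (b : HilbertBasis ι ℂ H), Summable fun i => ‖T (b i)‖ ^ 2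

end

/-! ### Auxiliary lemmas -/

noncomputable section SchattenAux
set_option linter.unusedSectionVars false

open scoped InnerProductSpace

section RankLemmas

variable {H : Type*} [NormedAddCommGroup H] [InnerProductSpace ℂ H]

local notation "⟪" x ", " y "⟫" => @inner ℂ _ _ x y

/-- `F` has rank at most `k`. -/
def FinRank (k : ℕ) (F : H →L[ℂ] H) : Prop :=
  ∃ v : Fin k → H, LinearMap.range (F : H →ₗ[ℂ] H) ≤ Submodule.span ℂ (Set.range v)

lemma finRank_zero (k : ℕ) : FinRank k (0 : H →L[ℂ] H) := by
  refine ⟨fun _ => 0, ?_⟩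
  simp

lemma finRank_mono {k l : ℕ} (hkl : k ≤ l) {F : H →L[ℂ] H} (h : FinRank k F) : FinRank l F := by
  obtain ⟨v, hv⟩ := h
  refine ⟨fun i => if h : (i : ℕ) < k then v ⟨i, h⟩ else 0, hv.trans (Submodule.span_mono ?_)⟩
  rintro x ⟨a, rfl⟩
  refine ⟨⟨(a : ℕ), lt_of_lt_of_le a.isLt hkl⟩, ?_⟩
  simp [a.isLt]

lemma finRank_add {k l : ℕ} {F G : H →L[ℂ] H} (hF : FinRank k F) (hG : FinRank l G) :
    FinRank (k + l) (F + G) := by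
  obtain ⟨v, hv⟩ := hF
  obtain ⟨w, hw⟩ := hG
  refine ⟨Fin.append v w, ?_⟩
  rintro x ⟨y, rfl⟩
  have h1 : F y ∈ Submodule.span ℂ (Set.range (Fin.append v w)) := by
    refine Submodule.span_mono ?_ (hv ⟨y, rfl⟩)
    rintro z ⟨a, rfl⟩
    exact ⟨Fin.castAdd l a, Fin.append_left v w a⟩
  have h2 : G y ∈ Submodule.span ℂ (Set.range (Fin.append v w)) := by
    refine Submodule.span_mono ?_ (hw ⟨y, rfl⟩)
    rintro z ⟨a, rfl⟩
    exact ⟨Fin.natAdd k a, Fin.append_right v w a⟩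
  simpa using Submodule.add_mem _ h1 h2

lemma finRank_smulRight (f g : H) : FinRank 1 ((innerSL ℂ f).smulRight g) := by
  refine ⟨fun _ => g, ?_⟩
  rintro x ⟨y, rfl⟩
  have hg : g ∈ Submodule.span ℂ (Set.range fun _ : Fin 1 => g) :=
    Submodule.subset_span ⟨0, rfl⟩
  simpa using Submodule.smul_mem _ (inner ℂ f y) hg

lemma finRank_finset_sum {α : Type*} (s : Finset α) (f : α → H →L[ℂ] H)
    (h : ∀ a ∈ s, FinRank 1 (f a)) : FinRank s.card (∑ a ∈ s, f a) := by
  classical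
  induction s using Finset.cons_induction with
  | empty => simpa using finRank_zero 0
  | cons a s ha ih =>
    rw [Finset.sum_cons, Finset.card_cons, add_comm (s.card) 1]
    exact finRank_add (h a (Finset.mem_cons_self a s))
      (ih fun b hb => h b (Finset.mem_cons_of_mem hb))

lemma singularValue_nonneg (T : H →L[ℂ] H) (k : ℕ) : 0 ≤ singularValue T k := by
  refine le_csInf ⟨‖T - 0‖, 0, finRank_zero k, rfl⟩ ?_
  rintro c ⟨F, -, rfl⟩
  exact norm_nonneg _

lemma singularValue_le {T F : H →L[ℂ] H} {k : ℕ} (h : FinRank k F) :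
    singularValue T k ≤ ‖T - F‖ := by
  refine csInf_le ⟨0, ?_⟩ ⟨F, h, rfl⟩
  rintro c ⟨G, -, rfl⟩
  exact norm_nonneg _

lemma singularValue_mono (T : H →L[ℂ] H) {k l : ℕ} (hkl : k ≤ l) :
    singularValue T l ≤ singularValue T k := by
  refine csInf_le_csInf ⟨0, ?_⟩ ⟨‖T - 0‖, 0, finRank_zero k, rfl⟩ ?_
  · rintro c ⟨G, -, rfl⟩
    exact norm_nonneg _
  · rintro c ⟨F, hF, rfl⟩
    exact ⟨F, finRank_mono hkl hF, rfl⟩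

end RankLemmas

section HilbertSchmidt

variable {H : Type*} [NormedAddCommGroup H] [InnerProductSpace ℂ H] [CompleteSpace H]
  {ι : Type*}

local notation "⟪" x ", " y "⟫" => @inner ℂ _ _ x y

lemma opNorm_sq_le_hs (b : HilbertBasis ι ℂ H) (A : H →L[ℂ] H) {h2 : ℝ}
    (hs : Summable fun i => ‖A (b i)‖ ^ 2) (hle : (∑' i, ‖A (b i)‖ ^ 2) ≤ h2) :
    ‖A‖ ^ 2 ≤ h2 := by
  have h2nn : 0 ≤ h2 := le_trans (tsum_nonneg fun i => sq_nonneg _) hle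
  have hA : ‖A‖ ≤ Real.sqrt h2 := by
    refine A.opNorm_le_bound (Real.sqrt_nonneg _) fun x => ?_
    have hx : HasSum (fun i => b.repr x i • A (b i)) (A x) := by
      have := (b.hasSum_repr x).mapL A
      simpa [_root_.map_smul] using this
    have hten : Tendsto (fun s : Finset ι => ‖∑ i ∈ s, b.repr x i • A (b i)‖) atTop
        (nhds ‖A x‖) := hx.norm
    refine le_of_tendsto hten (Filter.Eventually.of_forall fun s => ?_)
    have step1 : ‖∑ i ∈ s, b.repr x i • A (b i)‖ ≤ ∑ i ∈ s, ‖b.repr x i‖ * ‖A (b i)‖ := by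
      refine (norm_sum_le _ _).trans (le_of_eq ?_)
      simp [norm_smul]
    have cs := Finset.sum_mul_sq_le_sq_mul_sq s (fun i => ‖b.repr x i‖) (fun i => ‖A (b i)‖)
    have hrepr : (∑ i ∈ s, ‖b.repr x i‖ ^ 2) ≤ ‖x‖ ^ 2 := by
      have := b.orthonormal.sum_inner_products_le (s := s) x
      simpa [b.repr_apply_apply] using this
    have hcol : (∑ i ∈ s, ‖A (b i)‖ ^ 2) ≤ h2 :=
      le_trans (Summable.sum_le_tsum s (fun i _ => sq_nonneg _) hs) hle
    have hsq : (∑ i ∈ s, ‖b.repr x i‖ * ‖A (b i)‖) ^ 2 ≤ ‖x‖ ^ 2 * h2 := by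
      refine cs.trans (mul_le_mul hrepr hcol ?_ (sq_nonneg _))
      positivity
    have hnn : 0 ≤ ∑ i ∈ s, ‖b.repr x i‖ * ‖A (b i)‖ := by positivity
    have : (∑ i ∈ s, ‖b.repr x i‖ * ‖A (b i)‖) ≤ Real.sqrt (‖x‖ ^ 2 * h2) :=
      (Real.le_sqrt hnn (by positivity)).mpr hsq
    refine step1.trans (this.trans (le_of_eq ?_))
    rw [Real.sqrt_mul (sq_nonneg _), Real.sqrt_sq (norm_nonneg _), mul_comm]
  calc ‖A‖ ^ 2 ≤ Real.sqrt h2 ^ 2 := pow_le_pow_left₀ (norm_nonneg _) hA 2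
    _ = h2 := Real.sq_sqrt h2nn

lemma hs_step (b : HilbertBasis ι ℂ H) (A : H →L[ℂ] H) (f : H) (hf : ‖f‖ = 1)
    (hs : Summable fun i => ‖A (b i)‖ ^ 2) :
    HasSum (fun i => ‖(A - A.comp ((innerSL ℂ f).smulRight f)) (b i)‖ ^ 2)
      ((∑' i, ‖A (b i)‖ ^ 2) - ‖A f‖ ^ 2) := by
  set g := A f with hg
  have hcol : ∀ i, (A - A.comp ((innerSL ℂ f).smulRight f)) (b i)
      = A (b i) - ⟪f, b i⟫ • g := by
    intro i
    simp [ContinuousLinearMap.sub_apply, ContinuousLinearMap.comp_apply,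
      ContinuousLinearMap.smulRight_apply, innerSL_apply_apply, _root_.map_smul, hg]
  have h0 : HasSum (fun i => ‖A (b i)‖ ^ 2) (∑' i, ‖A (b i)‖ ^ 2) := hs.hasSum
  have h1c : HasSum (fun i => b.repr f i * ⟪g, A (b i)⟫) ((‖g‖ : ℂ) ^ 2) := by
    have hsum : HasSum (fun i => b.repr f i • A (b i)) (A f) := by
      have := (b.hasSum_repr f).mapL A
      simpa [_root_.map_smul] using this
    have := hsum.mapL (innerSL ℂ g)
    simpa [innerSL_apply_apply, inner_smul_right, hg, inner_self_eq_norm_sq_to_K] using this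
  have h1 : HasSum (fun i => (b.repr f i * ⟪g, A (b i)⟫).re) (‖g‖ ^ 2) := by
    have := h1c.mapL Complex.reCLM
    simpa only [Complex.reCLM_apply, ← Complex.ofReal_pow, Complex.ofReal_re] using this
  have h2s : HasSum (fun i => ‖b.repr f i‖ ^ 2) 1 := by
    have hp := b.hasSum_inner_mul_inner f f
    have hval : ⟪f, f⟫ = (1 : ℂ) := by
      rw [inner_self_eq_norm_sq_to_K (𝕜 := ℂ) f, hf]; norm_num
    rw [hval] at hp
    have := hp.mapL Complex.reCLM
    have heq : ∀ i, Complex.reCLM (⟪f, b i⟫ * ⟪b i, f⟫) = ‖b.repr f i‖ ^ 2 := by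
      intro i
      have e : ⟪f, b i⟫ * ⟪b i, f⟫ = ((Complex.normSq ⟪b i, f⟫ : ℝ) : ℂ) := by
        rw [← inner_conj_symm f (b i), mul_comm, Complex.mul_conj]
      rw [b.repr_apply_apply, e]
      simp [Complex.normSq_eq_norm_sq, ← Complex.ofReal_pow]
    simpa only [heq, Complex.reCLM_apply, Complex.one_re] using this
  have hcomb := (h0.sub (h1.mul_left 2)).add (h2s.mul_right (‖g‖ ^ 2))
  have hfun : ∀ i, ‖(A - A.comp ((innerSL ℂ f).smulRight f)) (b i)‖ ^ 2
      = ‖A (b i)‖ ^ 2 - 2 * (b.repr f i * ⟪g, A (b i)⟫).re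
        + ‖b.repr f i‖ ^ 2 * ‖g‖ ^ 2 := by
    intro i
    rw [hcol i, norm_sub_sq (𝕜 := ℂ), inner_smul_right, norm_smul, mul_pow]
    have e0 : ⟪f, b i⟫ * ⟪A (b i), g⟫ = (starRingEnd ℂ) (b.repr f i * ⟪g, A (b i)⟫) := by
      rw [b.repr_apply_apply, map_mul, inner_conj_symm, inner_conj_symm]
    have e2 : ‖⟪f, b i⟫‖ = ‖b.repr f i‖ := by
      rw [norm_inner_symm, b.repr_apply_apply]
    rw [e0, e2]
    simp only [RCLike.re_to_complex, Complex.conj_re]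
  have hv : (∑' i, ‖A (b i)‖ ^ 2) - 2 * ‖g‖ ^ 2 + 1 * ‖g‖ ^ 2
      = (∑' i, ‖A (b i)‖ ^ 2) - ‖g‖ ^ 2 := by ring
  rw [hv] at hcomb
  exact hcomb.congr_fun hfun

lemma greedy (b : HilbertBasis ι ℂ H) :
    ∀ (k : ℕ) (A : H →L[ℂ] H) (h2 : ℝ),
      (Summable fun i => ‖A (b i)‖ ^ 2) → (∑' i, ‖A (b i)‖ ^ 2) ≤ h2 →
      ∃ F : H →L[ℂ] H, FinRank k F ∧ ‖A - F‖ ^ 2 * (k + 1) ≤ h2 := by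
  intro k
  induction k with
  | zero =>
    intro A h2 hs hle
    exact ⟨0, finRank_zero 0, by simpa using opNorm_sq_le_hs b A hs hle⟩
  | succ k ih =>
    intro A h2 hs hle
    have h2nn : 0 ≤ h2 := le_trans (tsum_nonneg fun i => sq_nonneg _) hle
    by_cases hc : ‖A‖ ^ 2 * ((k : ℝ) + 1 + 1) ≤ h2
    · refine ⟨0, finRank_zero (k + 1), ?_⟩
      rw [sub_zero, show ((k + 1 : ℕ) : ℝ) + 1 = (k : ℝ) + 1 + 1 by push_cast; ring]
      exact hc
    · push_neg at hc
      have hkpos : (0 : ℝ) < (k : ℝ) + 1 + 1 := by positivity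
      have hAgt : h2 / ((k : ℝ) + 1 + 1) < ‖A‖ ^ 2 := by
        rw [div_lt_iff₀ hkpos]; linarith
      obtain ⟨f, hf1, hAf⟩ : ∃ f : H, ‖f‖ = 1 ∧ h2 / ((k : ℝ) + 1 + 1) < ‖A f‖ ^ 2 := by
        set ε : ℝ := Real.sqrt (h2 / ((k : ℝ) + 1 + 1)) with hε
        have hεnn : 0 ≤ ε := Real.sqrt_nonneg _
        have hεsq : ε ^ 2 = h2 / ((k : ℝ) + 1 + 1) := Real.sq_sqrt (by positivity)
        have hεA : ε < ‖A‖ := by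
          nlinarith [norm_nonneg A]
        by_contra hcon
        push_neg at hcon
        have : ‖A‖ ≤ ε := by
          refine A.opNorm_le_bound hεnn fun x => ?_
          rcases eq_or_ne x 0 with rfl | hx0
          · simp
          · have hxn : ‖x‖ ≠ 0 := norm_ne_zero_iff.mpr hx0
            have hunit : ‖(‖x‖⁻¹ : ℝ) • x‖ = 1 := by
              rw [norm_smul]; simp [abs_of_nonneg (norm_nonneg x)]; field_simp
            have := hcon ((‖x‖⁻¹ : ℝ) • x) hunit
            have hle' : ‖A ((‖x‖⁻¹ : ℝ) • x)‖ ≤ ε := by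
              nlinarith [norm_nonneg (A ((‖x‖⁻¹ : ℝ) • x))]
            have hasmul : A ((‖x‖⁻¹ : ℝ) • x) = (‖x‖⁻¹ : ℝ) • A x :=
              A.map_smul_of_tower _ _
            rw [hasmul, norm_smul] at hle'
            simp only [norm_inv, norm_norm] at hle'
            rw [inv_mul_le_iff₀ (by positivity)] at hle'
            linarith [hle']
        linarith
      set P : H →L[ℂ] H := (innerSL ℂ f).smulRight f with hP
      have hstep := hs_step b A f hf1 hs
      have hs' : Summable fun i => ‖(A - A.comp P) (b i)‖ ^ 2 := hstep.summable
      have htsum' : (∑' i, ‖(A - A.comp P) (b i)‖ ^ 2)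
          ≤ h2 - h2 / ((k : ℝ) + 1 + 1) := by
        rw [hstep.tsum_eq]
        have : ∑' i, ‖A (b i)‖ ^ 2 ≤ h2 := hle
        linarith
      obtain ⟨F', hF', hnorm⟩ := ih (A - A.comp P) (h2 - h2 / ((k : ℝ) + 1 + 1)) hs' htsum'
      refine ⟨F' + A.comp P, ?_, ?_⟩
      · have hr1 : FinRank 1 (A.comp P) := by
          have : A.comp P = (innerSL ℂ f).smulRight (A f) := by
            ext x
            simp [hP, ContinuousLinearMap.comp_apply, ContinuousLinearMap.smulRight_apply,
              _root_.map_smul]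
          rw [this]
          exact finRank_smulRight f (A f)
        exact finRank_add hF' hr1
      · have hkey : ‖A - (F' + A.comp P)‖ = ‖A - A.comp P - F'‖ := by
          congr 1
          abel
        rw [hkey]
        have hpos : (0 : ℝ) < (k : ℝ) + 1 := by positivity
        have h1 : ‖A - A.comp P - F'‖ ^ 2 ≤ (h2 - h2 / ((k : ℝ) + 1 + 1)) / ((k : ℝ) + 1) := by
          rw [le_div_iff₀ hpos]
          exact hnorm
        have h2eq : (h2 - h2 / ((k : ℝ) + 1 + 1)) / ((k : ℝ) + 1) = h2 / ((k : ℝ) + 1 + 1) := by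
          field_simp
          ring
        rw [h2eq] at h1
        rw [show ((k + 1 : ℕ) : ℝ) + 1 = (k : ℝ) + 1 + 1 by push_cast; ring]
        exact (le_div_iff₀ hkpos).mp h1

end HilbertSchmidt

section ColNorm

local notation "⟪" x ", " y "⟫" => @inner ℂ _ _ x y

lemma colnorm (n : ℕ) (m : EuclideanSpace ℝ (Fin n) → (Fin n → ℕ) → ℂ) (ν : Fin n → ℕ)
    (u : L2Rn n)
    (hu : (u : EuclideanSpace ℝ (Fin n) → ℂ) =ᵐ[volume]
      fun x => m x ν * (hermiteFunN n ν x : ℂ)) :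
    (∫ x, ‖m x ν‖ ^ 2 * hermiteFunN n ν x ^ 2) = ‖u‖ ^ 2 := by
  have hae : (fun x => RCLike.re (⟪(u : EuclideanSpace ℝ (Fin n) → ℂ) x,
      (u : EuclideanSpace ℝ (Fin n) → ℂ) x⟫)) =ᵐ[volume]
      fun x => ‖m x ν‖ ^ 2 * hermiteFunN n ν x ^ 2 := by
    filter_upwards [hu] with x hx
    rw [hx]
    have : RCLike.re (⟪m x ν * (hermiteFunN n ν x : ℂ), m x ν * (hermiteFunN n ν x : ℂ)⟫)
        = ‖m x ν * (hermiteFunN n ν x : ℂ)‖ ^ 2 := inner_self_eq_norm_sq _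
    rw [this, norm_mul, mul_pow, Complex.norm_real, Real.norm_eq_abs, sq_abs]
  calc (∫ x, ‖m x ν‖ ^ 2 * hermiteFunN n ν x ^ 2)
      = ∫ x, RCLike.re (⟪(u : EuclideanSpace ℝ (Fin n) → ℂ) x,
          (u : EuclideanSpace ℝ (Fin n) → ℂ) x⟫) := (integral_congr_ae hae).symm
    _ = RCLike.re (∫ x, ⟪(u : EuclideanSpace ℝ (Fin n) → ℂ) x,
          (u : EuclideanSpace ℝ (Fin n) → ℂ) x⟫) := integral_re (L2.integrable_inner u u)
    _ = RCLike.re (⟪u, u⟫) := by rw [L2.inner_def]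
    _ = ‖u‖ ^ 2 := inner_self_eq_norm_sq u

end ColNorm
end SchattenAux

set_option maxHeartbeats 2000000 in
/-- If `1 < r < 2` and `∑_ν |ν|^{2σ} ∫ |m(x,ν)|² φ_ν(x)² dx < ∞` for some
`σ > n(1/r - 1/2)`, then the Hermite pseudo-multiplier `T_m ∈ S_r(L²(ℝⁿ))`. -/
theorem pseudoMultiplier_memSchatten_of_lt_two
    (n : ℕ) (r σ : ℝ) (hr1 : 1 < r) (hr2 : r < 2)
    (hσ : σ > n * (1 / r - 1 / 2))
    (m : EuclideanSpace ℝ (Fin n) → (Fin n → ℕ) → ℂ)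
    (B : HilbertBasis (Fin n → ℕ) ℂ (L2Rn n))
    (hB : ∀ ν, (B ν : EuclideanSpace ℝ (Fin n) → ℂ) =ᵐ[volume]
      fun x => (hermiteFunN n ν x : ℂ))
    (T : L2Rn n →L[ℂ] L2Rn n)
    (hT : ∀ ν, (T (B ν) : EuclideanSpace ℝ (Fin n) → ℂ) =ᵐ[volume]
      fun x => m x ν * (hermiteFunN n ν x : ℂ))
    (hm : Summable fun ν : Fin n → ℕ =>
      (∑ j, (ν j : ℝ)) ^ (2 * σ) * ∫ x, ‖m x ν‖ ^ 2 * hermiteFunN n ν x ^ 2) :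
    MemSchatten r T := by
  classical
  have hr0 : (0 : ℝ) < r := lt_trans one_pos hr1
  rcases Nat.eq_zero_or_pos n with hn | npos
  · -- `n = 0`: the space is spanned by a single basis vector, so `T` has rank at most 1.
    subst hn
    have hrange : Set.range (B : (Fin 0 → ℕ) → L2Rn 0) = {B default} := by
      ext z
      simp only [Set.mem_range, Set.mem_singleton_iff]
      constructor
      · rintro ⟨i, rfl⟩
        rw [Subsingleton.elim i default]
      · rintro rfl
        exact ⟨default, rfl⟩
    have hclosed : IsClosed ((Submodule.span ℂ ({B default} : Set (L2Rn 0))) : Set (L2Rn 0)) :=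
      (Submodule.span ℂ ({B default} : Set (L2Rn 0))).closed_of_finiteDimensional
    have htop : ∀ x : L2Rn 0, x ∈ Submodule.span ℂ ({B default} : Set (L2Rn 0)) := by
      intro x
      have hdense := B.dense_span
      rw [hrange] at hdense
      have heq : Submodule.span ℂ ({B default} : Set (L2Rn 0)) = ⊤ := by
        rw [← hdense]
        exact (SetLike.ext' hclosed.closure_eq).symm
      rw [heq]
      trivial
    have hsv : ∀ k, 1 ≤ k → singularValue T k = 0 := by
      intro k hk1
      have hfr : FinRank k T := by
        refine ⟨fun _ => T (B default), ?_⟩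
        rintro x ⟨y, rfl⟩
        obtain ⟨c, hc⟩ := Submodule.mem_span_singleton.mp (htop y)
        rw [← hc, _root_.map_smul]
        exact Submodule.smul_mem _ c (Submodule.subset_span ⟨⟨0, hk1⟩, rfl⟩)
      have h1 := singularValue_le (T := T) hfr
      have h2 := singularValue_nonneg T k
      simp only [sub_self, norm_zero] at h1
      linarith
    refine summable_of_ne_finset_zero (s := {0}) fun k hk => ?_
    have hk1 : 1 ≤ k := Nat.one_le_iff_ne_zero.mpr (by simpa using hk)
    rw [hsv k hk1, Real.zero_rpow (ne_of_gt hr0)]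
  · -- main case `n ≥ 1`
    have hn1 : (1 : ℝ) ≤ (n : ℝ) := by exact_mod_cast npos
    have hnpos : (0 : ℝ) < (n : ℝ) := by linarith
    have hhalf : (0 : ℝ) < 1 / r - 1 / 2 := by
      rw [sub_pos, div_lt_div_iff₀ (by norm_num) hr0]
      linarith
    have hσ0 : 0 < σ := lt_trans (by positivity) hσ
    -- column norms and hypotheses reformulated
    set c : (Fin n → ℕ) → ℝ := fun ν => ‖T (B ν)‖ ^ 2 with hc
    set W : (Fin n → ℕ) → ℝ := fun ν => (∑ j, (ν j : ℝ)) ^ (2 * σ) with hW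
    have hWnn : ∀ ν, 0 ≤ W ν := fun ν => Real.rpow_nonneg (by positivity) _
    have hcnn : ∀ ν, 0 ≤ c ν := fun ν => sq_nonneg _
    have hm' : Summable (fun ν => W ν * c ν) :=
      hm.congr fun ν => by rw [colnorm n m ν (T (B ν)) (hT ν)]
    set M2 : ℝ := ∑' ν, W ν * c ν with hM2
    have hM2nn : 0 ≤ M2 := tsum_nonneg fun ν => mul_nonneg (hWnn ν) (hcnn ν)
    -- key singular value estimate
    have key : ∀ N k j : ℕ, 1 ≤ N → N ^ n + j ≤ k →
        singularValue T k ^ 2 * ((j : ℝ) + 1) ≤ ((N : ℝ) ^ (-(2 * σ))) * M2 := by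
      intro N k j hN hkj
      have hNR : (1 : ℝ) ≤ (N : ℝ) := by exact_mod_cast hN
      set S : Finset (Fin n → ℕ) :=
        (Fintype.piFinset fun _ : Fin n => Finset.range N).filter (fun ν => ∑ i, ν i < N)
        with hS
      have hcard : S.card ≤ N ^ n := by
        refine le_trans (Finset.card_filter_le _ _) (le_of_eq ?_)
        rw [Fintype.card_piFinset_const, Finset.card_range]
      have hout : ∀ ν, ν ∉ S → (N : ℝ) ≤ ∑ i, ((ν i : ℝ)) := by
        intro ν hν
        by_contra hlt
        push_neg at hlt
        have hsum : ∑ i, ν i < N := by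
          have : ((∑ i, ν i : ℕ) : ℝ) < (N : ℝ) := by push_cast; exact hlt
          exact_mod_cast this
        refine hν ?_
        rw [hS, Finset.mem_filter]
        refine ⟨Fintype.mem_piFinset.mpr fun i => Finset.mem_range.mpr ?_, hsum⟩
        exact lt_of_le_of_lt
          (Finset.single_le_sum (fun i _ => Nat.zero_le _) (Finset.mem_univ i)) hsum
      set F₀ : L2Rn n →L[ℂ] L2Rn n := ∑ ν ∈ S, (innerSL ℂ (B ν)).smulRight (T (B ν)) with hF₀
      have hF₀rank : FinRank (N ^ n) F₀ :=
        finRank_mono hcard (finRank_finset_sum S _ fun ν _ => finRank_smulRight _ _)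
      have hcols : ∀ i, (T - F₀) (B i) = if i ∈ S then 0 else T (B i) := by
        intro i
        have hinner : ∀ ν, (inner ℂ (B ν) (B i) : ℂ) = if ν = i then (1 : ℂ) else 0 := fun ν =>
          orthonormal_iff_ite.mp B.orthonormal ν i
        rw [ContinuousLinearMap.sub_apply, hF₀, ContinuousLinearMap.sum_apply]
        simp only [ContinuousLinearMap.smulRight_apply, innerSL_apply_apply, hinner, ite_smul,
          one_smul, zero_smul]
        rw [Finset.sum_ite_eq' S i (fun ν => T (B ν))]
        by_cases hi : i ∈ S <;> simp [hi]
      have hbound : ∀ i, ‖(T - F₀) (B i)‖ ^ 2 ≤ (N : ℝ) ^ (-(2 * σ)) * (W i * c i) := by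
        intro i
        rw [hcols i]
        by_cases hi : i ∈ S
        · have hz : ‖(0 : L2Rn n)‖ ^ 2 = 0 := by simp
          rw [if_pos hi, hz]
          exact mul_nonneg (Real.rpow_nonneg (Nat.cast_nonneg N) _)
            (mul_nonneg (hWnn i) (hcnn i))
        · simp only [hi, if_false]
          have h1 : (N : ℝ) ^ (2 * σ) ≤ W i :=
            Real.rpow_le_rpow (by positivity) (hout i hi) (by positivity)
          have hNpos : (0 : ℝ) < (N : ℝ) ^ (2 * σ) :=
            Real.rpow_pos_of_pos (by linarith) _
          have heq : c i = (N : ℝ) ^ (-(2 * σ)) * ((N : ℝ) ^ (2 * σ) * c i) := by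
            rw [Real.rpow_neg (by positivity), ← mul_assoc,
              inv_mul_cancel₀ (ne_of_gt hNpos), one_mul]
          calc ‖T (B i)‖ ^ 2 = c i := rfl
            _ = (N : ℝ) ^ (-(2 * σ)) * ((N : ℝ) ^ (2 * σ) * c i) := heq
            _ ≤ (N : ℝ) ^ (-(2 * σ)) * (W i * c i) := by
                refine mul_le_mul_of_nonneg_left ?_ (by positivity)
                exact mul_le_mul_of_nonneg_right h1 (hcnn i)
      have hsum0 : Summable fun i => ‖(T - F₀) (B i)‖ ^ 2 :=
        Summable.of_nonneg_of_le (fun i => sq_nonneg _) hbound (hm'.mul_left _)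
      have htsum0 : (∑' i, ‖(T - F₀) (B i)‖ ^ 2) ≤ (N : ℝ) ^ (-(2 * σ)) * M2 := by
        calc (∑' i, ‖(T - F₀) (B i)‖ ^ 2)
            ≤ ∑' i, (N : ℝ) ^ (-(2 * σ)) * (W i * c i) :=
              Summable.tsum_le_tsum hbound hsum0 (hm'.mul_left _)
          _ = (N : ℝ) ^ (-(2 * σ)) * M2 := by rw [tsum_mul_left, hM2]
      obtain ⟨F₁, hF₁rank, hF₁⟩ := greedy B j (T - F₀) _ hsum0 htsum0
      have hfr : FinRank (N ^ n + j) (F₀ + F₁) := finRank_add hF₀rank hF₁rank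
      have hTF : T - (F₀ + F₁) = T - F₀ - F₁ := by abel
      have hs1 : singularValue T k ≤ ‖T - F₀ - F₁‖ := by
        have h := singularValue_le (T := T) hfr
        rw [hTF] at h
        exact (singularValue_mono T hkj).trans h
      have h0k := singularValue_nonneg T k
      have hsq : singularValue T k ^ 2 ≤ ‖T - F₀ - F₁‖ ^ 2 := pow_le_pow_left₀ h0k hs1 2
      calc singularValue T k ^ 2 * ((j : ℝ) + 1)
          ≤ ‖T - F₀ - F₁‖ ^ 2 * ((j : ℝ) + 1) :=
            mul_le_mul_of_nonneg_right hsq (by positivity)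
        _ ≤ (N : ℝ) ^ (-(2 * σ)) * M2 := hF₁
    -- collect constants
    set a : ℝ := 2 * σ with ha
    set e : ℝ := a / n + 1 with he
    set C : ℝ := M2 * 2 ^ a * 2 ^ (a / (n : ℝ)) * 2 with hCdef
    have hCnn : 0 ≤ C := by positivity
    have hfinal : ∀ k : ℕ, 2 * 2 ^ n ≤ k → singularValue T k ^ 2 ≤ C * (k : ℝ) ^ (-e) := by
      intro k hk
      have hkR : ((2 * 2 ^ n : ℕ) : ℝ) ≤ (k : ℝ) := by exact_mod_cast hk
      have h2n : (2 : ℝ) ≤ (2 : ℝ) ^ n := by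
        calc (2 : ℝ) = 2 ^ 1 := (pow_one 2).symm
          _ ≤ 2 ^ n := pow_le_pow_right₀ (by norm_num) npos
      have hk2 : (2 : ℝ) ^ n ≤ (k : ℝ) / 2 := by
        push_cast at hkR
        linarith
      have hkpos : (0 : ℝ) < (k : ℝ) := by nlinarith
      have hk2pos : (0 : ℝ) < (k : ℝ) / 2 := by nlinarith
      set x : ℝ := ((k : ℝ) / 2) ^ (1 / (n : ℝ)) with hx
      have hxpos : 0 < x := Real.rpow_pos_of_pos hk2pos _
      have hx2 : (2 : ℝ) ≤ x := by
        have h1 : ((2 : ℝ) ^ n) ^ (1 / (n : ℝ)) ≤ x :=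
          Real.rpow_le_rpow (by positivity) hk2 (by positivity)
        calc (2 : ℝ) = ((2 : ℝ) ^ n) ^ (1 / (n : ℝ)) := by
              rw [← Real.rpow_natCast 2 n, ← Real.rpow_mul (by norm_num), mul_one_div,
                div_self (ne_of_gt hnpos), Real.rpow_one]
          _ ≤ x := h1
      set N : ℕ := ⌊x⌋₊ with hN
      have hN1 : 1 ≤ N := Nat.le_floor (by exact_mod_cast (by linarith : (1 : ℝ) ≤ x))
      have hNle : (N : ℝ) ≤ x := Nat.floor_le (le_of_lt hxpos)
      have hNx2 : x / 2 ≤ (N : ℝ) := by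
        have h1 : x - 1 < (N : ℝ) := Nat.sub_one_lt_floor x
        linarith
      have hNnk : (N : ℝ) ^ n ≤ (k : ℝ) / 2 := by
        calc (N : ℝ) ^ n ≤ x ^ n := pow_le_pow_left₀ (by positivity) hNle n
          _ = (k : ℝ) / 2 := by
              rw [hx, ← Real.rpow_natCast (((k : ℝ) / 2) ^ (1 / (n : ℝ))) n,
                ← Real.rpow_mul (le_of_lt hk2pos), one_div,
                inv_mul_cancel₀ (ne_of_gt hnpos), Real.rpow_one]
      have hNk : N ^ n ≤ k := by
        have : ((N ^ n : ℕ) : ℝ) ≤ (k : ℝ) := by push_cast; nlinarith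
        exact_mod_cast this
      set j : ℕ := k - N ^ n with hj
      have hkj : N ^ n + j = k := Nat.add_sub_cancel' hNk
      have hkey := key N k j hN1 (le_of_eq hkj)
      have hjcast : (j : ℝ) = (k : ℝ) - ((N : ℝ) ^ n) := by
        rw [hj, Nat.cast_sub hNk]; push_cast; ring
      have hjk : (k : ℝ) / 2 ≤ (j : ℝ) + 1 := by
        rw [hjcast]; linarith
      -- bound N^{-a}
      have hNpow : (N : ℝ) ^ (-a) ≤ (x / 2) ^ (-a) := by
        rw [Real.rpow_neg (by positivity), Real.rpow_neg (by positivity)]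
        exact inv_anti₀ (Real.rpow_pos_of_pos (by linarith) _)
          (Real.rpow_le_rpow (by positivity) hNx2 (by positivity))
      have e2 : (x / 2) ^ (-a) = x ^ (-a) * 2 ^ a := by
        rw [Real.div_rpow (le_of_lt hxpos) (by norm_num), Real.rpow_neg (by norm_num : (0:ℝ) ≤ 2),
          div_eq_mul_inv, inv_inv]
      have e1 : x ^ (-a) = ((k : ℝ) / 2) ^ (-a / (n : ℝ)) := by
        rw [hx, ← Real.rpow_mul (le_of_lt hk2pos)]
        congr 1
        field_simp
      have e3 : ((k : ℝ) / 2) ^ (-a / (n : ℝ))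
          = (k : ℝ) ^ (-a / (n : ℝ)) * 2 ^ (a / (n : ℝ)) := by
        rw [Real.div_rpow (le_of_lt hkpos) (by norm_num), neg_div,
          Real.rpow_neg (by norm_num : (0:ℝ) ≤ 2), div_eq_mul_inv, inv_inv]
      -- combine
      have hmain : singularValue T k ^ 2 * ((k : ℝ) / 2) ≤ (x / 2) ^ (-a) * M2 := by
        calc singularValue T k ^ 2 * ((k : ℝ) / 2)
            ≤ singularValue T k ^ 2 * ((j : ℝ) + 1) :=
              mul_le_mul_of_nonneg_left hjk (sq_nonneg _)
          _ ≤ ((N : ℝ) ^ (-(2 * σ))) * M2 := hkey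
          _ ≤ (x / 2) ^ (-a) * M2 := by
              rw [ha] at hNpow ⊢
              exact mul_le_mul_of_nonneg_right hNpow hM2nn
      have hdiv : singularValue T k ^ 2 ≤ ((x / 2) ^ (-a) * M2) / ((k : ℝ) / 2) := by
        rw [le_div_iff₀ hk2pos]
        exact hmain
      have heqC : ((x / 2) ^ (-a) * M2) / ((k : ℝ) / 2) = C * (k : ℝ) ^ (-e) := by
        have hke : (k : ℝ) ^ (-e) = (k : ℝ) ^ (-a / (n : ℝ)) * ((k : ℝ))⁻¹ := by
          rw [he, show -(a / (n : ℝ) + 1) = (-a / (n : ℝ)) + (-1) by ring,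
            Real.rpow_add hkpos, Real.rpow_neg_one]
        rw [e2, e1, e3, hCdef, hke]
        field_simp
      rw [heqC] at hdiv
      exact hdiv
    -- the exponent is greater than 1
    have hq : 1 < e * (r / 2) := by
      have heq' : (n : ℝ) * (1 / r - 1 / 2) * r = (n : ℝ) * (1 - r / 2) := by
        field_simp
      have h1 : (n : ℝ) * (1 - r / 2) < σ * r := by
        calc (n : ℝ) * (1 - r / 2) = (n : ℝ) * (1 / r - 1 / 2) * r := heq'.symm
          _ < σ * r := mul_lt_mul_of_pos_right hσ hr0
      have h2 : 1 - r / 2 < σ * r / (n : ℝ) := by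
        rw [lt_div_iff₀ hnpos]
        linarith
      have h3 : e * (r / 2) = σ * r / (n : ℝ) + r / 2 := by
        rw [he, ha]
        field_simp
      linarith
    -- conclude summability
    set K := 2 * 2 ^ n with hK
    show Summable fun k => singularValue T k ^ r
    rw [← summable_nat_add_iff K]
    have hbnd : ∀ k : ℕ, singularValue T (k + K) ^ r
        ≤ C ^ (r / 2) * ((k + K : ℕ) : ℝ) ^ (-(e * (r / 2))) := by
      intro k
      have h := hfinal (k + K) (Nat.le_add_left K k)
      have h0 := singularValue_nonneg T (k + K)
      have hKpos : 0 < K := by rw [hK]; positivity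
      have hkKpos : (0 : ℝ) < ((k + K : ℕ) : ℝ) := by
        have : 0 < k + K := Nat.lt_of_lt_of_le hKpos (Nat.le_add_left K k)
        exact_mod_cast this
      have e4 : singularValue T (k + K) ^ r = (singularValue T (k + K) ^ 2) ^ (r / 2) := by
        rw [← Real.rpow_natCast (singularValue T (k + K)) 2, ← Real.rpow_mul h0]
        congr 1
        push_cast
        ring
      rw [e4]
      calc (singularValue T (k + K) ^ 2) ^ (r / 2)
          ≤ (C * ((k + K : ℕ) : ℝ) ^ (-e)) ^ (r / 2) :=
            Real.rpow_le_rpow (sq_nonneg _) h (by positivity)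
        _ = C ^ (r / 2) * ((k + K : ℕ) : ℝ) ^ (-(e * (r / 2))) := by
            rw [Real.mul_rpow hCnn (Real.rpow_nonneg (le_of_lt hkKpos) _),
              ← Real.rpow_mul (le_of_lt hkKpos)]
            congr 1
            ring
    refine Summable.of_nonneg_of_le
      (fun k => Real.rpow_nonneg (singularValue_nonneg T _) r) hbnd ?_
    have hsum : Summable (fun k : ℕ => ((k : ℝ)) ^ (-(e * (r / 2)))) :=
      Real.summable_nat_rpow.mpr (by linarith)
    exact ((summable_nat_add_iff K).mpr hsum).mul_left _
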